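/- With T defined by T_1(δ_l, l) = w(l), T_1(κ, t) = 0 otherwise, and T_{h+1}(κ, l) = Σ_{t : (κ−δ_l)(t) ≥ 1} T_h(κ − δ_l, t) · w(l) · r̃(t)(l) · ∏_{i} r(i)(l)^{(κ−δ_l−δ_t)(i)} for κ(l) ≥ 1 (0 when κ(l)=0), for every n ≥ 1 the double sum Σ_{κ : Σκ = n} Σ_{t ∈ Fin p} T_n(κ, t) equals Σ_{c : Fin n → Fin p} W¹_n(c). -/
import Mathlib


open Finset

/-- The cell configuration of a cell assignment. -/
def cellConfig {p n : ℕ} (c : Fin n → Fin p) : Fin p → ℕ :=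
  fun i => (Finset.univ.filter (fun a => c a = i)).card

/-- The indicator vector `δ_l`. -/
def delta {p : ℕ} (l : Fin p) : Fin p → ℕ := fun i => if i = l then 1 else 0

/-- The predecessor weight `W¹` of a cell assignment. -/
def predW {R : Type*} [CommRing R] {p n : ℕ} (w : Fin p → R)
    (r : Fin p → Fin p → R) (rt : Fin p → Fin p → R) (c : Fin n → Fin p) : R :=
  (∏ a, w (c a)) *
    (∏ a : Fin n, ∏ b ∈ Finset.univ.filter
        (fun b : Fin n => (a : ℕ) < (b : ℕ) ∧ (b : ℕ) ≠ (a : ℕ) + 1),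
      r (c a) (c b)) *
    ∏ a : Fin n, ∏ b ∈ Finset.univ.filter (fun b : Fin n => (b : ℕ) = (a : ℕ) + 1),
      rt (c a) (c b)

/-- The dynamic-programming table for the immediate-predecessor relation. -/
def T1 {R : Type*} [CommRing R] {p : ℕ} (w : Fin p → R) (r : Fin p → Fin p → R)
    (rt : Fin p → Fin p → R) : ℕ → (Fin p → ℕ) → Fin p → R
  | 0, _, _ => 0
  | 1, κ, t => if κ = delta t then w t else 0
  | h + 2, κ, l =>
      if 1 ≤ κ l then
        ∑ t ∈ Finset.univ.filter (fun t : Fin p => 1 ≤ (κ - delta l) t),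
          T1 w r rt (h + 1) (κ - delta l) t * w l * rt t l *
            ∏ i, r i l ^ ((κ - delta l - delta t) i)
      else 0

lemma cellConfig_apply {p n : ℕ} (c : Fin n → Fin p) (i : Fin p) :
    cellConfig c i = ∑ a, if c a = i then 1 else 0 := by
  rw [cellConfig, Finset.card_filter]

lemma cellConfig_snoc {p k : ℕ} (c' : Fin k → Fin p) (l : Fin p) :
    cellConfig (Fin.snoc c' l) = cellConfig c' + delta l := by
  funext i
  simp only [Pi.add_apply, cellConfig_apply, delta, Fin.sum_univ_castSucc,
    Fin.snoc_castSucc, Fin.snoc_last]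
  congr 1
  simp [eq_comm]

lemma cellConfig_pos {p n : ℕ} (c : Fin n → Fin p) (a : Fin n) :
    1 ≤ cellConfig c (c a) :=
  Finset.card_pos.mpr ⟨a, by simp⟩

lemma sum_cellConfig {p n : ℕ} (c : Fin n → Fin p) : ∑ i, cellConfig c i = n := by
  have := Finset.card_eq_sum_card_fiberwise (f := c) (s := (univ : Finset (Fin n)))
    (t := univ) (fun x _ => mem_univ _)
  simpa [cellConfig] using this.symm

lemma prod_fiber {R : Type*} [CommRing R] {p k : ℕ} (f : Fin p → R) (c : Fin k → Fin p)
    (s : Finset (Fin k)) :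
    ∏ a ∈ s, f (c a) = ∏ i, f i ^ (s.filter (fun a => c a = i)).card := by
  rw [← Finset.prod_fiberwise_of_maps_to (g := c) (t := univ) (fun x _ => mem_univ _)]
  refine Finset.prod_congr rfl fun i _ => ?_
  rw [Finset.prod_congr rfl fun a ha => congrArg f (Finset.mem_filter.mp ha).2,
    Finset.prod_const]

lemma filter_ne_last_card {p k : ℕ} (c' : Fin (k+1) → Fin p) (i : Fin p) :
    ((univ.filter (fun a : Fin (k+1) => (a:ℕ) ≠ k)).filter (fun a => c' a = i)).card
      = (cellConfig c' - delta (c' (Fin.last k))) i := by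
  have hne : ∀ a : Fin (k+1), ((a:ℕ) ≠ k) ↔ (a ≠ Fin.last k) := fun a => by
    simp [Fin.ext_iff]
  have hset : (univ.filter (fun a : Fin (k+1) => (a:ℕ) ≠ k)).filter (fun a => c' a = i)
      = (univ.filter (fun a : Fin (k+1) => c' a = i)).erase (Fin.last k) := by
    ext a
    simp only [mem_filter, mem_erase, mem_univ, true_and, hne]

  rw [hset]
  by_cases h : c' (Fin.last k) = i
  · rw [Finset.card_erase_of_mem (by simp [h])]
    simp [cellConfig, delta, h.symm]
  · rw [Finset.erase_eq_of_notMem (by simp [h])]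
    simp [cellConfig, delta, Ne.symm h]

lemma prod_prod_snoc {M : Type*} [CommMonoid M] {k : ℕ} (g : Fin (k+2) → Fin (k+2) → M) :
    ∏ a : Fin (k+2), ∏ b : Fin (k+2), g a b
      = (∏ a : Fin (k+1), ∏ b : Fin (k+1), g a.castSucc b.castSucc)
        * (∏ a : Fin (k+1), g a.castSucc (Fin.last (k+1)))
        * (∏ b : Fin (k+1), g (Fin.last (k+1)) b.castSucc)
        * g (Fin.last (k+1)) (Fin.last (k+1)) := by
  rw [Fin.prod_univ_castSucc (f := fun a => ∏ b, g a b),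
    Fin.prod_univ_castSucc (f := fun b => g (Fin.last (k+1)) b),
    Finset.prod_congr rfl (fun a _ => Fin.prod_univ_castSucc (f := fun b => g a.castSucc b)),
    Finset.prod_mul_distrib]
  ac_rfl

lemma predW_snoc {R : Type*} [CommRing R] {p k : ℕ} (w : Fin p → R)
    (r : Fin p → Fin p → R) (rt : Fin p → Fin p → R) (c' : Fin (k+1) → Fin p) (l : Fin p) :
    predW w r rt (Fin.snoc c' l : Fin (k+2) → Fin p) =
      predW w r rt c' * w l * rt (c' (Fin.last k)) l *
        ∏ i, r i l ^ ((cellConfig c' - delta (c' (Fin.last k))) i) := by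
  set c : Fin (k+2) → Fin p := Fin.snoc c' l with hc
  have hcs : ∀ a : Fin (k+1), c a.castSucc = c' a := fun a => by simp [hc]
  have hcl : c (Fin.last (k+1)) = l := by simp [hc]
  have h1 : ∏ a, w (c a) = (∏ a, w (c' a)) * w l := by
    rw [Fin.prod_univ_castSucc]
    simp [hcs, hcl]
  have h2 : (∏ a : Fin (k+2), ∏ b ∈ Finset.univ.filter
        (fun b : Fin (k+2) => (a : ℕ) < (b : ℕ) ∧ (b : ℕ) ≠ (a : ℕ) + 1),
      r (c a) (c b))
      = (∏ a : Fin (k+1), ∏ b ∈ Finset.univ.filter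
          (fun b : Fin (k+1) => (a : ℕ) < (b : ℕ) ∧ (b : ℕ) ≠ (a : ℕ) + 1),
        r (c' a) (c' b)) *
        ∏ a ∈ univ.filter (fun a : Fin (k+1) => (a:ℕ) ≠ k), r (c' a) l := by
    simp only [Finset.prod_filter]
    rw [prod_prod_snoc (fun a b =>
      if (a : ℕ) < (b : ℕ) ∧ (b : ℕ) ≠ (a : ℕ) + 1 then r (c a) (c b) else 1)]
    have e1 : ∀ b : Fin (k+1), ¬(((Fin.last (k+1) : Fin (k+2)) : ℕ) < ((b.castSucc : Fin (k+2)) : ℕ)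
        ∧ ((b.castSucc : Fin (k+2)) : ℕ) ≠ ((Fin.last (k+1) : Fin (k+2)) : ℕ) + 1) := fun b => by
      have := b.isLt; simp only [Fin.val_last, Fin.coe_castSucc]; omega
    have e2 : ∀ a : Fin (k+1), (((a.castSucc : Fin (k+2)) : ℕ) < ((Fin.last (k+1) : Fin (k+2)) : ℕ)
        ∧ ((Fin.last (k+1) : Fin (k+2)) : ℕ) ≠ ((a.castSucc : Fin (k+2)) : ℕ) + 1) ↔ ((a:ℕ) ≠ k) := fun a => by
      have := a.isLt; simp only [Fin.val_last, Fin.coe_castSucc]; omega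
    simp only [e1, e2, if_false, ite_false, Fin.coe_castSucc, Fin.val_last, hcs, hcl,
      Finset.prod_const_one, mul_one, Nat.lt_irrefl, false_and, and_false, if_neg]
    have e1' : ∀ x : Fin (k+1), ¬(k+1 < (x:ℕ) ∧ (x:ℕ) ≠ k+1+1) := fun x => by
      have := x.isLt; omega
    have e2' : ∀ x : Fin (k+1), ((x:ℕ) < k+1 ∧ k+1 ≠ (x:ℕ)+1) ↔ ((x:ℕ) ≠ k) := fun x => by
      have := x.isLt; omega
    simp only [e1', e2', if_false, Finset.prod_const_one, mul_one]
  have h3 : (∏ a : Fin (k+2), ∏ b ∈ Finset.univ.filter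
        (fun b : Fin (k+2) => (b : ℕ) = (a : ℕ) + 1), rt (c a) (c b))
      = (∏ a : Fin (k+1), ∏ b ∈ Finset.univ.filter
          (fun b : Fin (k+1) => (b : ℕ) = (a : ℕ) + 1), rt (c' a) (c' b)) *
        rt (c' (Fin.last k)) l := by
    simp only [Finset.prod_filter]
    rw [prod_prod_snoc (fun a b => if (b : ℕ) = (a : ℕ) + 1 then rt (c a) (c b) else 1)]
    simp only [Fin.coe_castSucc, Fin.val_last, hcs, hcl]
    have f0 : ¬((k+1:ℕ) = (k+1)+1) := by omega
    have f1 : ∀ x : Fin (k+1), ¬((x:ℕ) = k+1+1) := fun x => by have := x.isLt; omega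
    have f2 : ∀ x : Fin (k+1), ((k+1 : ℕ) = (x:ℕ)+1) ↔ ((x:ℕ) = k) := fun x => by omega
    simp only [f0, f1, f2, if_false, Finset.prod_const_one, mul_one, one_mul]
    congr 1
    rw [Fin.prod_univ_castSucc (f := fun x : Fin (k+1) => if (x:ℕ) = k then rt (c' x) l else 1)]
    have f3 : ∀ x : Fin k, ¬((x.castSucc:ℕ) = k) := fun x => by
      have := x.isLt; simp only [Fin.coe_castSucc]; omega
    have f3' : ∀ x : Fin k, ¬((x:ℕ) = k) := fun x => Nat.ne_of_lt x.isLt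
    simp [f3, f3', Fin.val_last]
  rw [predW, predW, h1, h2, h3, prod_fiber (fun i => r i l) c']
  simp only [filter_ne_last_card]
  ring

lemma T1_eq {R : Type*} [CommRing R] {p : ℕ} (w : Fin p → R) (r rt : Fin p → Fin p → R) :
    ∀ (k : ℕ) (κ : Fin p → ℕ) (t : Fin p),
    T1 w r rt (k+1) κ t =
      ∑ c : Fin (k+1) → Fin p,
        if cellConfig c = κ ∧ c (Fin.last k) = t then predW w r rt c else 0 := by
  intro k
  induction k with
  | zero =>
    intro κ t
    have hconf : ∀ x : Fin p, cellConfig (fun _ : Fin 1 => x) = delta x := by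
      intro x; funext i
      by_cases hxi : x = i <;> simp [cellConfig, delta, hxi, eq_comm]
    have hpred : ∀ x : Fin p, predW w r rt (fun _ : Fin 1 => x) = w x := by
      intro x
      have hb : ∀ b : Fin 1, (b:ℕ) = 0 := fun b => by omega
      simp [predW, hb]
    rw [show T1 w r rt (0+1) κ t = if κ = delta t then w t else 0 from rfl,
      ← Fintype.sum_equiv (Equiv.funUnique (Fin 1) (Fin p)).symm _
        (fun c : Fin 1 → Fin p =>
          if cellConfig c = κ ∧ c (Fin.last 0) = t then predW w r rt c else 0)
        (fun x => rfl)]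
    rw [Finset.sum_eq_single t]
    · have he : ((Equiv.funUnique (Fin 1) (Fin p)).symm t) = (fun _ : Fin 1 => t) := by
        funext i
        have : i = 0 := Subsingleton.elim i 0
        subst this; rfl
      rw [he]
      simp only [hconf, hpred]
      simp [eq_comm]
    · intro x _ hx; simp [hx]
    · simp
  | succ k IH =>
    intro κ l
    rw [show T1 w r rt (k+1+1) κ l = if 1 ≤ κ l then
        ∑ t ∈ Finset.univ.filter (fun t : Fin p => 1 ≤ (κ - delta l) t),
          T1 w r rt (k + 1) (κ - delta l) t * w l * rt t l *
            ∏ i, r i l ^ ((κ - delta l - delta t) i)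
      else 0 from rfl]
    rw [← Fintype.sum_equiv (Fin.snocEquiv (fun _ : Fin (k+2) => Fin p)) _
        (fun c : Fin (k+2) → Fin p =>
          if cellConfig c = κ ∧ c (Fin.last (k+1)) = l then predW w r rt c else 0)
        (fun q => rfl), Fintype.sum_prod_type]
    symm
    have step1 : ∀ x : Fin p, ∀ c' : Fin (k+1) → Fin p,
        (if cellConfig (Fin.snocEquiv (fun _ : Fin (k+2) => Fin p) (x, c')) = κ ∧
            (Fin.snocEquiv (fun _ : Fin (k+2) => Fin p) (x, c')) (Fin.last (k+1)) = l then
          predW w r rt (Fin.snocEquiv (fun _ : Fin (k+2) => Fin p) (x, c')) else 0)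
        = (if cellConfig (Fin.snoc c' x : Fin (k+2) → Fin p) = κ ∧ x = l then
            predW w r rt (Fin.snoc c' x : Fin (k+2) → Fin p) else 0) := by
      intro x c'
      simp [Fin.snocEquiv]
    simp only [step1]
    rw [Finset.sum_eq_single l]
    rotate_left
    · intro x _ hx; simp [hx]
    · simp
    simp only [and_true, cellConfig_snoc, predW_snoc]
    by_cases hκ : 1 ≤ κ l
    rotate_left
    · rw [if_neg hκ]
      refine Finset.sum_eq_zero fun c' _ => ?_
      rw [if_neg]
      intro h
      apply hκ
      have := congrFun h l
      simp only [Pi.add_apply, delta] at this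
      simp only [if_true, eq_self_iff_true] at this
      omega
    rw [if_pos hκ]
    have hcond : ∀ c' : Fin (k+1) → Fin p,
        (cellConfig c' + delta l = κ) ↔ (cellConfig c' = κ - delta l) := by
      intro c'
      constructor
      · intro h; funext i; have h2 := congrFun h i
        simp only [Pi.add_apply, Pi.sub_apply, delta] at h2 ⊢
        by_cases hil : i = l
        · subst hil; rw [if_pos rfl] at h2 ⊢; omega
        · rw [if_neg hil] at h2 ⊢; omega
      · intro h; funext i; have h2 := congrFun h i
        simp only [Pi.sub_apply, Pi.add_apply, delta] at h2 ⊢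
        by_cases hil : i = l
        · subst hil; rw [if_pos rfl] at h2 ⊢; omega
        · rw [if_neg hil] at h2 ⊢; omega
    simp only [hcond]
    have step2 : ∀ c' : Fin (k+1) → Fin p,
        (if cellConfig c' = κ - delta l then
          predW w r rt c' * w l * rt (c' (Fin.last k)) l *
            ∏ i, r i l ^ ((cellConfig c' - delta (c' (Fin.last k))) i) else 0)
        = ∑ t : Fin p, if cellConfig c' = κ - delta l ∧ c' (Fin.last k) = t then
            predW w r rt c' * w l * rt t l *
              ∏ i, r i l ^ ((κ - delta l - delta t) i) else 0 := by
      intro c'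
      by_cases hcfg : cellConfig c' = κ - delta l
      · rw [Finset.sum_eq_single (c' (Fin.last k))]
        · simp [hcfg]
        · intro t _ ht; simp [Ne.symm ht]
        · simp
      · simp [hcfg]
    simp only [step2]
    rw [Finset.sum_comm]
    rw [Finset.sum_filter]
    refine Finset.sum_congr rfl fun t _ => ?_
    have hIH := IH (κ - delta l) t
    by_cases hpos : 1 ≤ (κ - delta l) t
    · rw [if_pos hpos]
      rw [hIH, Finset.sum_mul, Finset.sum_mul, Finset.sum_mul]
      refine Finset.sum_congr rfl fun c' _ => ?_
      by_cases hcc : cellConfig c' = κ - delta l ∧ c' (Fin.last k) = t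
      · simp only [if_pos hcc]; try ring
      · simp only [if_neg hcc]; try ring
    · rw [if_neg hpos]
      refine Finset.sum_eq_zero fun c' _ => ?_
      rw [if_neg]
      rintro ⟨h1, h2⟩
      apply hpos
      rw [← h1, ← h2]
      exact cellConfig_pos c' (Fin.last k)

theorem stmt9 {R : Type*} [CommRing R] {p : ℕ} (hp : 1 ≤ p)
    (w : Fin p → R) (r : Fin p → Fin p → R) (rt : Fin p → Fin p → R)
    (n : ℕ) (hn : 1 ≤ n) :
    ∑ κ ∈ Finset.Nat.antidiagonalTuple p n, ∑ t : Fin p, T1 w r rt n κ t =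
      ∑ c : Fin n → Fin p, predW w r rt c := by
  obtain ⟨k, rfl⟩ : ∃ k, n = k + 1 := ⟨n - 1, (Nat.succ_pred_eq_of_pos hn).symm⟩
  simp only [T1_eq w r rt k]
  have hti : ∀ (κ : Fin p → ℕ),
      (∑ t : Fin p, ∑ c : Fin (k+1) → Fin p,
        if cellConfig c = κ ∧ c (Fin.last k) = t then predW w r rt c else 0)
      = ∑ c : Fin (k+1) → Fin p, if cellConfig c = κ then predW w r rt c else 0 := by
    intro κ
    rw [Finset.sum_comm]
    refine Finset.sum_congr rfl fun c _ => ?_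
    by_cases h : cellConfig c = κ
    · simp [h]
    · simp [h]
  simp only [hti]
  rw [Finset.sum_comm]
  refine Finset.sum_congr rfl fun c _ => ?_
  rw [Finset.sum_ite_eq, if_pos]
  rw [Finset.Nat.mem_antidiagonalTuple]
  exact sum_cellConfig c
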